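/- Let l ≥ 1 be an integer and let G be an (l−1)-extendable graph of order at least 2l+2. Then G is not l-extendable if and only if there exists a subset S ⊆ V(G) such that the induced subgraph G[S] contains l pairwise disjoint (independent) edges, every connected component of G−S is factor-critical, and o(G−S) = |S| − 2l + 2. -/

import Mathlib

open SimpleGraph

/-- `M` is a perfect matching of the simple graph `G`, viewed as a set of edges:
the edges of `M` are pairwise disjoint edges of `G` covering every vertex. -/
def IsPM {V : Type*} (G : SimpleGraph V) (M : Set (Sym2 V)) : Prop :=
  M ⊆ G.edgeSet ∧
  (∀ e ∈ M, ∀ f ∈ M, e ≠ f → ∀ v : V, v ∈ e → v ∉ f) ∧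
  (∀ v : V, ∃ e ∈ M, v ∈ e)

/-- `S` is a forcing set of the perfect matching `M` of `G`:
`S ⊆ M` and `M` is the unique perfect matching of `G` containing `S`. -/
def IsForcingSet {V : Type*} (G : SimpleGraph V) (M S : Set (Sym2 V)) : Prop :=
  S ⊆ M ∧ ∀ M', IsPM G M' → S ⊆ M' → M' = M

/-- The forcing number `f(G,M)`: smallest cardinality of a forcing set of `M`. -/
noncomputable def forcingNum {V : Type*} (G : SimpleGraph V) (M : Set (Sym2 V)) : ℕ :=
  sInf {k | ∃ S, IsForcingSet G M S ∧ S.ncard = k}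

/-- The minimum forcing number `f(G)`. -/
noncomputable def minForcing {V : Type*} (G : SimpleGraph V) : ℕ :=
  sInf {k | ∃ M, IsPM G M ∧ forcingNum G M = k}

/-- The maximum forcing number `F(G)`. -/
noncomputable def maxForcing {V : Type*} (G : SimpleGraph V) : ℕ :=
  sSup {k | ∃ M, IsPM G M ∧ forcingNum G M = k}

/-- Vertex connectivity `κ(G)`: least size of a set of vertices whose deletion
disconnects the graph or leaves at most one vertex. -/
noncomputable def vertexConn {V : Type*} (G : SimpleGraph V) : ℕ :=
  sInf {k | ∃ X : Set V, X.ncard = k ∧ (¬ (G.induce Xᶜ).Connected ∨ Xᶜ.ncard ≤ 1)}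

/-- Edge connectivity `λ(G)`: least size of a set of edges whose deletion
disconnects the graph. -/
noncomputable def edgeConn {V : Type*} (G : SimpleGraph V) : ℕ :=
  sInf {k | ∃ F : Set (Sym2 V), F ⊆ G.edgeSet ∧ F.ncard = k ∧ ¬ (G.deleteEdges F).Connected}

/-- `G` is `l`-extendable: `G` is connected, has at least `2l+2` vertices, has a
perfect matching, and every matching of size `l` extends to a perfect matching. -/
def IsExtendable {V : Type*} [Fintype V] (G : SimpleGraph V) (l : ℕ) : Prop :=
  G.Connected ∧ 2 * l + 2 ≤ Fintype.card V ∧ (∃ M, IsPM G M) ∧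
    ∀ N : Set (Sym2 V), N ⊆ G.edgeSet →
      (∀ e ∈ N, ∀ f ∈ N, e ≠ f → ∀ v : V, v ∈ e → v ∉ f) → N.ncard = l →
      ∃ M, IsPM G M ∧ N ⊆ M

/-- `G` is factor-critical: deleting any vertex leaves a graph with a perfect matching. -/
def IsFactorCritical {V : Type*} (G : SimpleGraph V) : Prop :=
  ∀ v : V, ∃ M, IsPM (G.induce {v}ᶜ) M

/-- `o(G)`: the number of connected components of odd order. -/
noncomputable def _root_.oddComponents {V : Type*} (G : SimpleGraph V) : ℕ :=
  {c : G.ConnectedComponent | Odd c.supp.ncard}.ncard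

/-- `G` belongs to `𝒦_{n,n}⁺`: it is obtained from `K_{n,n}` by adding edges inside one
partite set; equivalently there is an independent set `A` of size `n` all of whose
vertices are adjacent to all vertices outside `A`. -/
def InKnnPlus {V : Type*} (n : ℕ) (G : SimpleGraph V) : Prop :=
  ∃ A : Set V, A.ncard = n ∧ (∀ a ∈ A, ∀ b ∈ A, ¬ G.Adj a b) ∧
    ∀ a ∈ A, ∀ b ∉ A, G.Adj a b

/-- `M` is a perfect matching of the subgraph of `G` induced by the vertex set `T`. -/
def IsPMOn {V : Type*} (G : SimpleGraph V) (T : Set V) (M : Set (Sym2 V)) : Prop :=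
  M ⊆ G.edgeSet ∧ (∀ e ∈ M, ∀ w : V, w ∈ e → w ∈ T) ∧
  (∀ e ∈ M, ∀ f ∈ M, e ≠ f → ∀ v : V, v ∈ e → v ∉ f) ∧
  (∀ w ∈ T, ∃ e ∈ M, w ∈ e)

/-- The forcing number of the perfect matching `M` of the subgraph of `G`
induced by the vertex set `T`. -/
noncomputable def forcingNumOn {V : Type*} (G : SimpleGraph V) (T : Set V)
    (M : Set (Sym2 V)) : ℕ :=
  sInf {k | ∃ S, S ⊆ M ∧ (∀ M', IsPMOn G T M' → S ⊆ M' → M' = M) ∧ S.ncard = k}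

/-- `{i,j}` is one of the `k` special pairs `{2t, 2t+1}` (0-indexed), `t < k`. -/
def pairIdx (k : ℕ) {n : ℕ} (i j : Fin n) : Prop :=
  ∃ t, t < k ∧ ((i.val = 2 * t ∧ j.val = 2 * t + 1) ∨ (j.val = 2 * t ∧ i.val = 2 * t + 1))

/-- The graph `H_k` on vertices `u_0,…,u_{n-1}` (left copy) and `v_0,…,v_{n-1}`
(right copy): edges `u_i v_i` for all `i`; `u_{2t} u_{2t+1}` and `v_{2t} v_{2t+1}`
for `t < k`; and `u_i v_j`, `u_j v_i` for every pair `i ≠ j` that is not one of the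
`k` special pairs. -/
def Hgraph (n k : ℕ) : SimpleGraph (Fin n ⊕ Fin n) :=
  SimpleGraph.fromRel (fun x y =>
    match x, y with
    | Sum.inl i, Sum.inr j => i = j ∨ ¬ pairIdx k i j
    | Sum.inl i, Sum.inl j => pairIdx k i j
    | Sum.inr i, Sum.inr j => pairIdx k i j
    | Sum.inr _, Sum.inl _ => False)

/-- The perfect matching `M₀ = {u_i v_i : i}` of `H_k`. -/
def M0 (n : ℕ) : Set (Sym2 (Fin n ⊕ Fin n)) :=
  {e | ∃ i : Fin n, e = s(Sum.inl i, Sum.inr i)}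

section AuxLemmas
open Set

variable {V : Type*} {G : SimpleGraph V}

private lemma edge_repr (e : Sym2 V) (he : e ∈ G.edgeSet) :
    ∃ x y, G.Adj x y ∧ e = s(x, y) := by
  induction e with
  | _ x y => exact ⟨x, y, he, rfl⟩

private lemma mem_edge {e : Sym2 V} (he : e ∈ G.edgeSet) {v : V} (hv : v ∈ e) :
    ∃ w, G.Adj v w ∧ e = s(v, w) := by
  obtain ⟨x, y, hadj, rfl⟩ := edge_repr e he
  rcases Sym2.mem_iff.mp hv with rfl | rfl
  · exact ⟨y, hadj, rfl⟩
  · exact ⟨x, hadj.symm, Sym2.eq_swap.symm⟩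

private lemma isPMOn_empty : IsPMOn G ∅ (∅ : Set (Sym2 V)) := by
  refine ⟨by simp, by simp, by simp, by simp⟩

private lemma isPMOn_diff {A : Set V} {M : Set (Sym2 V)} (h : IsPMOn G A M)
    {e : Sym2 V} (he : e ∈ M) {x y : V} (hxy : e = s(x, y)) :
    IsPMOn G (A \ {x, y}) (M \ {e}) := by
  obtain ⟨h1, h2, h3, h4⟩ := h
  refine ⟨fun f hf => h1 hf.1, ?_, fun a ha b hb => h3 a ha.1 b hb.1, ?_⟩
  · rintro f ⟨hfM, hfe⟩ w hw
    refine ⟨h2 f hfM w hw, ?_⟩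
    intro hwxy
    have hwe : w ∈ e := by
      subst hxy; rcases hwxy with rfl | rfl <;> simp
    exact h3 f hfM e he hfe w hw hwe
  · rintro w ⟨hwA, hwxy⟩
    obtain ⟨f, hf, hwf⟩ := h4 w hwA
    have hfe : f ≠ e := by
      rintro rfl
      subst hxy
      rcases Sym2.mem_iff.mp hwf with rfl | rfl <;> simp at hwxy
    exact ⟨f, ⟨hf, hfe⟩, hwf⟩

private lemma isPMOn_even [Finite V] {A : Set V} {M : Set (Sym2 V)}
    (h : IsPMOn G A M) : Even A.ncard := by
  suffices H : ∀ n (A : Set V) (M : Set (Sym2 V)), A.ncard = n → IsPMOn G A M → Even n by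
    exact H _ A M rfl h
  intro n
  induction n using Nat.strong_induction_on with
  | _ n ih =>
    intro A M hn h
    rcases A.eq_empty_or_nonempty with rfl | ⟨w, hw⟩
    · simp at hn; simp [← hn]
    · obtain ⟨e, he, hwe⟩ := h.2.2.2 w hw
      obtain ⟨x, hadj, hxy⟩ := mem_edge (h.1 he) hwe
      have hx : x ∈ A := h.2.1 e he x (by rw [hxy]; simp)
      have hne : w ≠ x := hadj.ne
      have h' := isPMOn_diff h he hxy
      have hsub : ({w, x} : Set V) ⊆ A := by
        rintro z (rfl | rfl) <;> assumption
      have hle : 2 ≤ n := by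
        have := Set.ncard_le_ncard hsub (Set.toFinite _)
        rwa [Set.ncard_pair hne, hn] at this
      have hcard : (A \ {w, x}).ncard = n - 2 := by
        rw [Set.ncard_diff hsub (Set.toFinite _), Set.ncard_pair hne, hn]
      have hev := ih (n - 2) (by omega) _ _ hcard h'
      obtain ⟨k, hk⟩ := hev
      exact ⟨k + 1, by omega⟩

private def eSupp (N : Set (Sym2 V)) : Set V := {v | ∃ e ∈ N, v ∈ e}

private lemma eSupp_card {G : SimpleGraph V} [Finite V] {N : Set (Sym2 V)}
    (hsub : N ⊆ G.edgeSet)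
    (hd : ∀ e ∈ N, ∀ f ∈ N, e ≠ f → ∀ v : V, v ∈ e → v ∉ f) :
    (eSupp N).ncard = 2 * N.ncard := by
  suffices H : ∀ n (N : Set (Sym2 V)), N.ncard = n → N ⊆ G.edgeSet →
      (∀ e ∈ N, ∀ f ∈ N, e ≠ f → ∀ v : V, v ∈ e → v ∉ f) →
      (eSupp N).ncard = 2 * n by exact H _ N rfl hsub hd
  intro n
  induction n using Nat.strong_induction_on with
  | _ n ih =>
    intro N hn hsub hd
    rcases Nat.eq_zero_or_pos n with rfl | hpos
    · have : N = ∅ := by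
        rw [← Set.ncard_eq_zero (Set.toFinite _)]; exact hn
      subst this; simp [eSupp]
    · have hne : N.Nonempty := by
        apply Set.nonempty_of_ncard_ne_zero; omega
      obtain ⟨e, he⟩ := hne
      obtain ⟨x, y, hadj, hxy⟩ := edge_repr e (hsub he)
      have hsplit : eSupp N = ({x, y} : Set V) ∪ eSupp (N \ {e}) := by
        ext v
        constructor
        · rintro ⟨f, hf, hvf⟩
          by_cases hfe : f = e
          · subst hfe; rw [hxy] at hvf
            rcases Sym2.mem_iff.mp hvf with rfl | rfl <;> simp
          · exact Or.inr ⟨f, ⟨hf, hfe⟩, hvf⟩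
        · rintro (hv | ⟨f, hf, hvf⟩)
          · refine ⟨e, he, ?_⟩
            rw [hxy]; rcases hv with rfl | rfl <;> simp
          · exact ⟨f, hf.1, hvf⟩
      have hdisj : Disjoint ({x, y} : Set V) (eSupp (N \ {e})) := by
        rw [Set.disjoint_left]
        rintro v hv ⟨f, ⟨hf, hfe⟩, hvf⟩
        have hve : v ∈ e := by rw [hxy]; rcases hv with rfl | rfl <;> simp
        exact hd f hf e he hfe v hvf hve
      have hcard' : (N \ {e}).ncard = n - 1 := by
        rw [Set.ncard_diff_singleton_of_mem he, hn]
      have := ih (n - 1) (by omega) (N \ {e}) hcard' (fun f hf => hsub hf.1)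
        (fun a ha b hb => hd a ha.1 b hb.1)
      rw [hsplit, Set.ncard_union_eq hdisj (Set.toFinite _) (Set.toFinite _),
        Set.ncard_pair hadj.ne, this]
      omega

private lemma isPMOn_union {A B : Set V} {M M' : Set (Sym2 V)} (hAB : Disjoint A B)
    (h1 : IsPMOn G A M) (h2 : IsPMOn G B M') : IsPMOn G (A ∪ B) (M ∪ M') := by
  obtain ⟨a1, a2, a3, a4⟩ := h1
  obtain ⟨b1, b2, b3, b4⟩ := h2
  have key : ∀ e ∈ M, ∀ f ∈ M', ∀ v : V, v ∈ e → v ∉ f := by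
    intro e he f hf v hv hv'
    exact Set.disjoint_left.mp hAB (a2 e he v hv) (b2 f hf v hv')
  refine ⟨?_, ?_, ?_, ?_⟩
  · rintro e (he | he); exacts [a1 he, b1 he]
  · rintro e (he | he) w hw
    exacts [Or.inl (a2 e he w hw), Or.inr (b2 e he w hw)]
  · rintro e (he | he) f (hf | hf) hef v hv hv'
    · exact a3 e he f hf hef v hv hv'
    · exact key e he f hf v hv hv'
    · exact key f hf e he v hv' hv
    · exact b3 e he f hf hef v hv hv'
  · rintro w (hw | hw)
    · obtain ⟨e, he, hwe⟩ := a4 w hw; exact ⟨e, Or.inl he, hwe⟩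
    · obtain ⟨e, he, hwe⟩ := b4 w hw; exact ⟨e, Or.inr he, hwe⟩

private lemma isPMOn_single {x y : V} (h : G.Adj x y) :
    IsPMOn G ({x, y} : Set V) ({s(x, y)} : Set (Sym2 V)) := by
  refine ⟨by simpa using h, ?_, ?_, ?_⟩
  · rintro e rfl w hw
    rcases Sym2.mem_iff.mp hw with rfl | rfl <;> simp
  · rintro e rfl f rfl hef; exact absurd rfl hef
  · rintro w hw
    refine ⟨s(x, y), rfl, ?_⟩
    rcases hw with rfl | rfl <;> simp

private lemma isPMOn_biUnion {ι : Type*} [DecidableEq ι] {s : Finset ι}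
    {A : ι → Set V} {M : ι → Set (Sym2 V)}
    (hd : ∀ i ∈ s, ∀ j ∈ s, i ≠ j → Disjoint (A i) (A j))
    (h : ∀ i ∈ s, IsPMOn G (A i) (M i)) :
    IsPMOn G (⋃ i ∈ s, A i) (⋃ i ∈ s, M i) := by
  induction s using Finset.induction with
  | empty => simpa using isPMOn_empty
  | @insert a s ha ih =>
    rw [Finset.set_biUnion_insert, Finset.set_biUnion_insert]
    refine isPMOn_union ?_ (h a (Finset.mem_insert_self a s)) (ih ?_ ?_)
    · refine Set.disjoint_iUnion₂_right.mpr fun i hi => ?_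
      exact hd a (Finset.mem_insert_self a s) i (Finset.mem_insert_of_mem hi)
        (fun he => ha (he ▸ hi))
    · exact fun i hi j hj hij => hd i (Finset.mem_insert_of_mem hi) j
        (Finset.mem_insert_of_mem hj) hij
    · exact fun i hi => h i (Finset.mem_insert_of_mem hi)

private lemma isPM_of_univ {M : Set (Sym2 V)} (h : IsPMOn G Set.univ M) : IsPM G M :=
  ⟨h.1, h.2.2.1, fun v => h.2.2.2 v trivial⟩

private lemma univ_of_isPM {M : Set (Sym2 V)} (h : IsPM G M) : IsPMOn G Set.univ M :=
  ⟨h.1, fun _ _ _ _ => trivial, h.2.1, fun w _ => h.2.2 w⟩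

private lemma oddComponents_mod {W : Type*} [Fintype W] (H : SimpleGraph W) :
    _root_.oddComponents H % 2 = Fintype.card W % 2 := by
  classical
  haveI : Fintype H.ConnectedComponent := Fintype.ofFinite _
  have hsupp : ∀ c : H.ConnectedComponent,
      c.supp.ncard = (Finset.univ.filter fun v => H.connectedComponentMk v = c).card := by
    intro c
    rw [← Set.ncard_coe_finset]
    congr 1
    ext v
    simp [ConnectedComponent.mem_supp_iff]
  have hcard : Fintype.card W = ∑ c : H.ConnectedComponent, c.supp.ncard := by
    have := Finset.card_eq_sum_card_fiberwise
      (f := H.connectedComponentMk) (s := Finset.univ) (t := Finset.univ)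
      (fun x _ => Finset.mem_univ _)
    rw [Finset.card_univ] at this
    rw [this]
    exact Finset.sum_congr rfl fun c _ => (hsupp c).symm
  have hodd : _root_.oddComponents H
      = (Finset.univ.filter fun c : H.ConnectedComponent => Odd c.supp.ncard).card := by
    rw [_root_.oddComponents, ← Set.ncard_coe_finset]
    congr 1
    ext c
    simp
  rw [hodd, hcard, Finset.card_filter]
  conv_rhs => rw [Finset.sum_nat_mod]
  congr 1
  refine Finset.sum_congr rfl fun c _ => ?_
  rcases Nat.even_or_odd c.supp.ncard with h | h
  · simp [Nat.not_odd_iff_even.mpr h, Nat.even_iff.mp h]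
  · simp [h, Nat.odd_iff.mp h]

private lemma oddComponents_induce_mod [Finite V] (G : SimpleGraph V) (B : Set V) :
    _root_.oddComponents (G.induce B) % 2 = B.ncard % 2 := by
  haveI : Fintype V := Fintype.ofFinite _
  haveI : Fintype B := Fintype.ofFinite _
  rw [oddComponents_mod, ← Nat.card_coe_set_eq, Nat.card_eq_fintype_card]

private lemma reachable_mono {B C : Set V} (h : B ⊆ C) {x y : ↑B}
    (hr : (G.induce B).Reachable x y) :
    (G.induce C).Reachable ⟨↑x, h x.2⟩ ⟨↑y, h y.2⟩ :=
  hr.map (G.induceHomOfLE h).toHom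

private lemma reachable_stay {B C : Set V} (hBC : B ⊆ C)
    (hcl : ∀ x ∈ B, ∀ y ∈ C, G.Adj x y → y ∈ B) {x y : ↑C}
    (hr : (G.induce C).Reachable x y) (hx : ↑x ∈ B) :
    ∃ hy : ↑y ∈ B, (G.induce B).Reachable ⟨↑x, hx⟩ ⟨↑y, hy⟩ := by
  obtain ⟨w⟩ := hr
  induction w with
  | nil => exact ⟨hx, Reachable.refl _⟩
  | @cons u v' y' hadj p ih =>
    have hadj' : G.Adj ↑u ↑v' := hadj
    have hb : ↑v' ∈ B := hcl ↑u hx ↑v' v'.2 hadj'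
    obtain ⟨hy, hre⟩ := ih hb
    refine ⟨hy, Reachable.trans ?_ hre⟩
    exact Adj.reachable (by exact hadj')

private lemma supp_closed {B : Set V} (c : (G.induce B).ConnectedComponent) :
    ∀ x ∈ Subtype.val '' c.supp, ∀ y ∈ B, G.Adj x y → y ∈ Subtype.val '' c.supp := by
  rintro x ⟨x', hx', rfl⟩ y hy hadj
  refine ⟨⟨y, hy⟩, ?_, rfl⟩
  rw [ConnectedComponent.mem_supp_iff] at hx' ⊢
  rw [← hx']
  exact ConnectedComponent.connectedComponentMk_eq_of_adj (by exact hadj.symm)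

private lemma supp_val_sub {B : Set V} (c : (G.induce B).ConnectedComponent) :
    Subtype.val '' c.supp ⊆ B := by
  rintro x ⟨x', _, rfl⟩; exact x'.2

private lemma supp_val_nonempty {B : Set V} (c : (G.induce B).ConnectedComponent) :
    (Subtype.val '' c.supp).Nonempty := by
  obtain ⟨v, hv⟩ := c.exists_rep
  exact ⟨↑v, v, by rw [ConnectedComponent.mem_supp_iff]; exact hv, rfl⟩

private lemma ncard_supp_val {B : Set V} (c : (G.induce B).ConnectedComponent) :
    (Subtype.val '' c.supp).ncard = c.supp.ncard :=
  Set.ncard_image_of_injective _ Subtype.val_injective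

private lemma comp_eq_of_mem {B : Set V} {c d : (G.induce B).ConnectedComponent} {x : V}
    (hx : x ∈ Subtype.val '' c.supp) (hy : x ∈ Subtype.val '' d.supp) : c = d := by
  obtain ⟨u, hu, rfl⟩ := hx
  obtain ⟨w, hw, hwu⟩ := hy
  have : w = u := Subtype.val_injective hwu
  subst this
  rw [ConnectedComponent.mem_supp_iff] at hu hw
  rw [← hu, ← hw]

private lemma comp_transfer {B C : Set V} {c : (G.induce B).ConnectedComponent}
    (hsub : Subtype.val '' c.supp ⊆ C)
    (hcl : ∀ x ∈ Subtype.val '' c.supp, ∀ y ∈ C, G.Adj x y → y ∈ Subtype.val '' c.supp) :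
    ∃ c' : (G.induce C).ConnectedComponent,
      Subtype.val '' c'.supp = Subtype.val '' c.supp := by
  obtain ⟨v, hvc⟩ := c.exists_rep
  have hv : v ∈ c.supp := by rw [ConnectedComponent.mem_supp_iff]; exact hvc
  have hvC : ↑v ∈ C := hsub ⟨v, hv, rfl⟩
  refine ⟨(G.induce C).connectedComponentMk ⟨↑v, hvC⟩, ?_⟩
  apply Set.Subset.antisymm
  · rintro x ⟨u, hu, rfl⟩
    rw [ConnectedComponent.mem_supp_iff] at hu
    have hr : (G.induce C).Reachable ⟨↑v, hvC⟩ u := (ConnectedComponent.exact hu).symm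
    obtain ⟨hy, _⟩ := reachable_stay hsub hcl hr ⟨v, hv, rfl⟩
    exact hy
  · rintro x ⟨u, hu, rfl⟩
    rw [ConnectedComponent.mem_supp_iff] at hu
    have hr : (G.induce B).Reachable u v := ConnectedComponent.exact (hu.trans hvc.symm)
    have hsubB : Subtype.val '' c.supp ⊆ B := supp_val_sub _
    obtain ⟨hy, hre⟩ := reachable_stay hsubB (supp_closed _) hr ⟨u, hu, rfl⟩
    have := reachable_mono hsub hre
    refine ⟨⟨↑u, hsub ⟨u, hu, rfl⟩⟩, ?_, rfl⟩
    rw [ConnectedComponent.mem_supp_iff]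
    exact ConnectedComponent.sound this

private lemma transfer_family [Finite V] {B C : Set V}
    (𝒞 : Set ((G.induce B).ConnectedComponent))
    (hodd : ∀ c ∈ 𝒞, Odd c.supp.ncard)
    (hsub : ∀ c ∈ 𝒞, Subtype.val '' c.supp ⊆ C)
    (hcl : ∀ c ∈ 𝒞, ∀ x ∈ Subtype.val '' c.supp, ∀ y ∈ C, G.Adj x y →
      y ∈ Subtype.val '' c.supp) :
    ∃ 𝒞' : Set ((G.induce C).ConnectedComponent),
      (∀ c' ∈ 𝒞', Odd c'.supp.ncard) ∧ 𝒞'.ncard = 𝒞.ncard ∧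
      ∀ c' ∈ 𝒞', ∃ c ∈ 𝒞, Subtype.val '' c'.supp = Subtype.val '' c.supp := by
  rcases 𝒞.eq_empty_or_nonempty with rfl | ⟨c₀, hc₀⟩
  · exact ⟨∅, by simp, by simp, by simp⟩
  obtain ⟨u, hu⟩ := c₀.exists_rep
  have hxC : ↑u ∈ C := hsub c₀ hc₀ ⟨u, by rw [ConnectedComponent.mem_supp_iff]; exact hu, rfl⟩
  haveI : Nonempty ((G.induce C).ConnectedComponent) :=
    ⟨(G.induce C).connectedComponentMk ⟨↑u, hxC⟩⟩
  have hex : ∀ c ∈ 𝒞, ∃ c' : (G.induce C).ConnectedComponent,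
      Subtype.val '' c'.supp = Subtype.val '' c.supp :=
    fun c hc => comp_transfer (hsub c hc) (hcl c hc)
  choose! f hf using hex
  refine ⟨f '' 𝒞, ?_, ?_, ?_⟩
  · rintro _ ⟨c, hc, rfl⟩
    have := hf c hc
    have h2 : (f c).supp.ncard = c.supp.ncard := by
      rw [← ncard_supp_val, this, ncard_supp_val]
    rw [h2]; exact hodd c hc
  · apply Set.ncard_image_of_injOn
    intro c1 h1 c2 h2 heq
    have e1 := hf c1 h1
    have e2 := hf c2 h2
    have : Subtype.val '' c1.supp = Subtype.val '' c2.supp := by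
      rw [← e1, heq, e2]
    have := Set.image_injective.mpr Subtype.val_injective this
    exact ConnectedComponent.supp_injective this
  · rintro _ ⟨c, hc, rfl⟩
    exact ⟨c, hc, hf c hc⟩

private lemma oddComponents_le_ncard [Finite V] {B A Y : Set V} {M : Set (Sym2 V)}
    (hM : IsPMOn G A M)
    (h1 : B \ A ⊆ Y)
    (h2 : ∀ e ∈ M, ∀ v w : V, v ∈ e → w ∈ e → v ∈ B → w ∉ B → w ∈ Y) :
    _root_.oddComponents (G.induce B) ≤ Y.ncard := by
  classical
  set O := {c : (G.induce B).ConnectedComponent | Odd c.supp.ncard} with hO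
  rcases O.eq_empty_or_nonempty with hOe | ⟨c₀, hc₀⟩
  · show O.ncard ≤ _
    rw [hOe]; simp
  haveI : Nonempty V := by
    obtain ⟨u, _⟩ := c₀.exists_rep
    exact ⟨↑u⟩
  have hex : ∀ c ∈ O, ∃ y : V, y ∈ Y ∧
      ((y ∈ Subtype.val '' c.supp ∧ y ∉ A) ∨
        (∃ v ∈ Subtype.val '' c.supp, ∃ e ∈ M, v ∈ e ∧ y ∈ e ∧ y ∉ B)) := by
    intro c hc
    by_contra hno
    push_neg at hno
    set K := Subtype.val '' c.supp with hK
    have hKB : K ⊆ B := supp_val_sub c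
    have hKA : K ⊆ A := by
      intro x hx
      by_contra hxA
      have hxY : x ∈ Y := h1 ⟨hKB hx, hxA⟩
      exact hxA ((hno x hxY).1 hx)
    have hMc : IsPMOn G K {e ∈ M | ∃ v, v ∈ e ∧ v ∈ K} := by
      refine ⟨fun e he => hM.1 he.1, ?_, fun a ha b hb => hM.2.2.1 a ha.1 b hb.1, ?_⟩
      · rintro e ⟨heM, v, hve, hvK⟩ w hwe
        obtain ⟨z, hadj, hez⟩ := mem_edge (hM.1 heM) hve
        have hwvz : w = v ∨ w = z := by
          rw [hez] at hwe; exact Sym2.mem_iff.mp hwe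
        have hzK : z ∈ K := by
          by_cases hzB : z ∈ B
          · exact supp_closed c v hvK z hzB hadj
          · exfalso
            have hzY : z ∈ Y := h2 e heM v z hve (by rw [hez]; simp) (hKB hvK) hzB
            exact hzB ((hno z hzY).2 v hvK e heM hve (by rw [hez]; simp))
        rcases hwvz with rfl | rfl
        exacts [hvK, hzK]
      · intro x hx
        obtain ⟨e, he, hxe⟩ := hM.2.2.2 x (hKA hx)
        exact ⟨e, ⟨he, x, hxe, hx⟩, hxe⟩
    have hev : Even K.ncard := isPMOn_even hMc
    rw [hK, ncard_supp_val c] at hev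
    exact (Nat.not_even_iff_odd.mpr hc) hev
  choose! f hf using hex
  show O.ncard ≤ _
  apply Set.ncard_le_ncard_of_injOn f (fun c hc => (hf c hc).1) ?_ (Set.toFinite Y)
  intro c1 h1' c2 h2' heq
  have w1 := (hf c1 h1').2
  have w2 := (hf c2 h2').2
  rw [heq] at w1
  set y := f c2
  rcases w1 with ⟨hy1, _⟩ | ⟨v1, hv1, e1, he1, hv1e, hye1, hyB⟩
  · rcases w2 with ⟨hy2, _⟩ | ⟨v2, hv2, e2, he2, hv2e, hye2, hyB⟩
    · exact comp_eq_of_mem hy1 hy2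
    · exact absurd (supp_val_sub c1 hy1) hyB
  · rcases w2 with ⟨hy2, _⟩ | ⟨v2, hv2, e2, he2, hv2e, hye2, hyB2⟩
    · exact absurd (supp_val_sub c2 hy2) hyB
    · have hee : e1 = e2 := by
        by_contra hne
        exact hM.2.2.1 e1 he1 e2 he2 hne y hye1 hye2
      subst hee
      obtain ⟨z, hadj, hez⟩ := mem_edge (hM.1 he1) hye1
      have hv1z : v1 = z := by
        have hh := hv1e
        rw [hez] at hh
        rcases Sym2.mem_iff.mp hh with h | h
        · exact absurd (h ▸ supp_val_sub c1 hv1) hyB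
        · exact h
      have hv2z : v2 = z := by
        have hh := hv2e
        rw [hez] at hh
        rcases Sym2.mem_iff.mp hh with h | h
        · exact absurd (h ▸ supp_val_sub c2 hv2) hyB
        · exact h
      subst hv1z; subst hv2z
      exact comp_eq_of_mem hv1 hv2

private lemma odd_upgrade [Finite V] {B T' : Set V} (hT : T' ⊆ B) (hB : Even B.ncard)
    (h : T'.ncard < _root_.oddComponents (G.induce (B \ T'))) :
    T'.ncard + 2 ≤ _root_.oddComponents (G.induce (B \ T')) := by
  have hmod := oddComponents_induce_mod G (B \ T')
  have hd : (B \ T').ncard = B.ncard - T'.ncard := Set.ncard_diff hT (toFinite _)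
  have hle : T'.ncard ≤ B.ncard := Set.ncard_le_ncard hT (toFinite _)
  obtain ⟨k, hk⟩ := hB
  omega

end AuxLemmas
section AuxTutte
open Set

variable {V : Type*}

private lemma max_tutte_aux [Finite V] (G : SimpleGraph V) (A : Set V) (d : ℕ)
    (hub : ∀ T ⊆ A, _root_.oddComponents (G.induce (A \ T)) ≤ T.ncard + d)
    (hex : ∃ T ⊆ A, _root_.oddComponents (G.induce (A \ T)) = T.ncard + d)
    (hvio : ∀ B ⊆ A, B ≠ A → Even B.ncard → (¬ ∃ M, IsPMOn G B M) →
      ∃ T' ⊆ B, T'.ncard + 2 ≤ _root_.oddComponents (G.induce (B \ T'))) :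
    ∃ T ⊆ A, _root_.oddComponents (G.induce (A \ T)) = T.ncard + d ∧
      ∀ c : (G.induce (A \ T)).ConnectedComponent, Odd c.supp.ncard ∧
        ∀ v ∈ Subtype.val '' c.supp, ∃ M, IsPMOn G (Subtype.val '' c.supp \ {v}) M := by
  classical
  have hPbdd : BddAbove {k | ∃ T ⊆ A, _root_.oddComponents (G.induce (A \ T)) = T.ncard + d ∧
      T.ncard = k} := by
    refine ⟨A.ncard, ?_⟩
    rintro k ⟨T, hT, _, hk⟩
    rw [← hk]; exact Set.ncard_le_ncard hT (Set.toFinite _)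
  have hPne : {k | ∃ T ⊆ A, _root_.oddComponents (G.induce (A \ T)) = T.ncard + d ∧
      T.ncard = k}.Nonempty := by
    obtain ⟨T, h1, h2⟩ := hex; exact ⟨T.ncard, T, h1, h2, rfl⟩
  obtain ⟨T, hTA, heq, hTk⟩ := Nat.sSup_mem hPne hPbdd
  have hmax : ∀ T₂ ⊆ A, _root_.oddComponents (G.induce (A \ T₂)) = T₂.ncard + d →
      T₂.ncard ≤ T.ncard := by
    intro T₂ h2 h3
    rw [hTk]
    exact le_csSup hPbdd ⟨T₂, h2, h3, rfl⟩
  refine ⟨T, hTA, heq, ?_⟩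
  set D := A \ T with hD
  have hDA : D ⊆ A := diff_subset
  -- Claim 1 : every component of G.induce D is odd
  have hodd : ∀ c : (G.induce D).ConnectedComponent, Odd c.supp.ncard := by
    intro c
    by_contra hceven
    rw [Nat.not_odd_iff_even] at hceven
    obtain ⟨v0, hv0⟩ := c.exists_rep
    have hv0s : v0 ∈ c.supp := by rw [ConnectedComponent.mem_supp_iff]; exact hv0
    have hvD : (v0 : V) ∈ D := v0.2
    set v : V := ↑v0 with hv
    set K := Subtype.val '' c.supp with hK
    have hvK : v ∈ K := ⟨v0, hv0s, rfl⟩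
    have hKD : K ⊆ D := supp_val_sub c
    have hKeven : Even K.ncard := by rw [hK, ncard_supp_val]; exact hceven
    have hKpos : 1 ≤ K.ncard := by
      have : K.Nonempty := ⟨v, hvK⟩
      have := this.ncard_pos (Set.toFinite _)
      omega
    have hKvodd : Odd (K \ {v}).ncard := by
      have h1 : (K \ {v}).ncard = K.ncard - 1 :=
        Set.ncard_diff_singleton_of_mem hvK
      obtain ⟨k, hk⟩ := hKeven
      rw [h1, hk]
      exact ⟨k - 1, by omega⟩
    have hone : ∃ cs : (G.induce (K \ {v})).ConnectedComponent, Odd cs.supp.ncard := by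
      by_contra hno
      push_neg at hno
      have hzero : _root_.oddComponents (G.induce (K \ {v})) = 0 := by
        show Set.ncard _ = 0
        rw [Set.ncard_eq_zero (Set.toFinite _)]
        ext c'
        simp only [mem_setOf_eq, mem_empty_iff_false, iff_false]
        exact Nat.not_odd_iff_even.mpr (Nat.not_odd_iff_even.mp (fun h => (hno c' h).elim))
      have := oddComponents_induce_mod G (K \ {v})
      rw [hzero] at this
      rw [Nat.odd_iff] at hKvodd
      omega
    obtain ⟨cs, hcs⟩ := hone
    set D' := D \ {v} with hD'
    -- transfer all odd components of D
    obtain ⟨F1, hF1odd, hF1card, hF1sup⟩ := transfer_family (G := G) (B := D) (C := D')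
      {c' : (G.induce D).ConnectedComponent | Odd c'.supp.ncard} (fun _ h => h)
      (by
        intro c' hc' x hx
        have hxD : x ∈ D := supp_val_sub c' hx
        refine ⟨hxD, ?_⟩
        intro hxv
        rw [mem_singleton_iff] at hxv
        subst hxv
        have : c' = c := comp_eq_of_mem hx hvK
        subst this
        exact (Nat.not_odd_iff_even.mpr hceven) hc')
      (by
        intro c' _ x hx y hy hadj
        exact supp_closed c' x hx y hy.1 hadj)
    -- transfer the odd component of K \ {v}
    obtain ⟨F2, hF2odd, hF2card, hF2sup⟩ := transfer_family (G := G) (B := K \ {v}) (C := D')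
      {cs} (by rintro c' rfl; exact hcs)
      (by
        rintro c' rfl x hx
        have hxKv : x ∈ K \ {v} := supp_val_sub c' hx
        exact ⟨hKD hxKv.1, hxKv.2⟩)
      (by
        rintro c' rfl x hx y hy hadj
        have hxKv : x ∈ K \ {v} := supp_val_sub c' hx
        have hyK : y ∈ K := supp_closed c x hxKv.1 y hy.1 hadj
        have hyKv : y ∈ K \ {v} := ⟨hyK, hy.2⟩
        exact supp_closed c' x hx y hyKv hadj)
    have hdisjF : Disjoint F1 F2 := by
      rw [Set.disjoint_left]
      intro c' h1 h2
      obtain ⟨ca, hca, hsa⟩ := hF1sup c' h1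
      obtain ⟨cb, hcb, hsb⟩ := hF2sup c' h2
      rw [mem_singleton_iff] at hcb
      subst hcb
      obtain ⟨x, hxs⟩ := supp_val_nonempty cb
      have hx1 : x ∈ Subtype.val '' ca.supp := by rw [← hsa, hsb]; exact hxs
      have hxK : x ∈ K := (supp_val_sub cb hxs).1
      have : ca = c := comp_eq_of_mem hx1 hxK
      subst this
      exact (Nat.not_odd_iff_even.mpr hceven) hca
    have hcount : T.ncard + d + 1 ≤ _root_.oddComponents (G.induce D') := by
      have hsub12 : F1 ∪ F2 ⊆ {c' : (G.induce D').ConnectedComponent | Odd c'.supp.ncard} := by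
        rintro c' (h | h)
        exacts [hF1odd c' h, hF2odd c' h]
      have := Set.ncard_le_ncard hsub12 (Set.toFinite _)
      rw [Set.ncard_union_eq hdisjF (Set.toFinite _) (Set.toFinite _), hF1card, hF2card] at this
      have h1 : ({c' : (G.induce D).ConnectedComponent | Odd c'.supp.ncard}).ncard
          = T.ncard + d := heq
      rw [h1] at this
      simpa [_root_.oddComponents] using this
    have hsetid : A \ insert v T = D' := by
      rw [hD', hD]
      ext x
      simp only [mem_diff, mem_insert_iff, mem_singleton_iff]
      tauto
    have hub' := hub (insert v T) (insert_subset (hDA hvD) hTA)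
    rw [hsetid] at hub'
    have hvT : v ∉ T := hvD.2
    have hins : (insert v T).ncard = T.ncard + 1 :=
      Set.ncard_insert_of_notMem hvT (Set.toFinite _)
    have heq2 : _root_.oddComponents (G.induce (A \ insert v T)) = (insert v T).ncard + d := by
      rw [hsetid, hins]
      omega
    have := hmax (insert v T) (insert_subset (hDA hvD) hTA) heq2
    omega
  refine fun c => ⟨hodd c, ?_⟩
  -- Claim 2 : factor-critical pieces
  intro v hvK
  by_contra hno
  set K := Subtype.val '' c.supp with hK
  have hKD : K ⊆ D := supp_val_sub c
  have hvD : v ∈ D := hKD hvK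
  have hBA : K \ {v} ⊆ A := fun x hx => hDA (hKD hx.1)
  have hBne : K \ {v} ≠ A := by
    intro hEq
    have : v ∈ K \ {v} := hEq ▸ hDA hvD
    exact this.2 rfl
  have hKodd : Odd K.ncard := by rw [hK, ncard_supp_val]; exact hodd c
  have hBeven : Even (K \ {v}).ncard := by
    have h1 : (K \ {v}).ncard = K.ncard - 1 :=
      Set.ncard_diff_singleton_of_mem hvK
    obtain ⟨k, hk⟩ := hKodd
    rw [h1, hk]
    exact ⟨k, by omega⟩
  obtain ⟨T', hT'B, hT'le⟩ := hvio (K \ {v}) hBA hBne hBeven hno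
  set E := (K \ {v}) \ T' with hE
  set D₂ := D \ insert v T' with hD₂
  have hinsK : insert v T' ⊆ K := by
    intro x hx
    rcases hx with rfl | hx
    · exact hvK
    · exact (hT'B hx).1
  -- family 1 : odd components of D other than c
  obtain ⟨F1, hF1odd, hF1card, hF1sup⟩ := transfer_family (G := G) (B := D) (C := D₂)
    ({c' : (G.induce D).ConnectedComponent | Odd c'.supp.ncard} \ {c})
    (fun c' hc' => hc'.1)
    (by
      rintro c' ⟨_, hc'c⟩ x hx
      refine ⟨supp_val_sub c' hx, ?_⟩
      intro hxi
      have hxK : x ∈ K := hinsK hxi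
      exact hc'c (mem_singleton_iff.mpr (comp_eq_of_mem hx hxK)))
    (by
      rintro c' _ x hx y hy hadj
      exact supp_closed c' x hx y hy.1 hadj)
  -- family 2 : odd components of E
  obtain ⟨F2, hF2odd, hF2card, hF2sup⟩ := transfer_family (G := G) (B := E) (C := D₂)
    {cs : (G.induce E).ConnectedComponent | Odd cs.supp.ncard} (fun _ h => h)
    (by
      intro cs _ x hx
      have hxE : x ∈ E := supp_val_sub cs hx
      refine ⟨hKD hxE.1.1, ?_⟩
      rintro (rfl | hxT')
      · exact hxE.1.2 rfl
      · exact hxE.2 hxT')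
    (by
      intro cs _ x hx y hy hadj
      have hxE : x ∈ E := supp_val_sub cs hx
      have hyK : y ∈ K := supp_closed c x hxE.1.1 y hy.1 hadj
      have hyE : y ∈ E := by
        refine ⟨⟨hyK, ?_⟩, ?_⟩
        · intro hyv; exact hy.2 (Or.inl hyv)
        · intro hyT'; exact hy.2 (Or.inr hyT')
      exact supp_closed cs x hx y hyE hadj)
  have hdisjF : Disjoint F1 F2 := by
    rw [Set.disjoint_left]
    intro c' h1 h2
    obtain ⟨ca, hca, hsa⟩ := hF1sup c' h1
    obtain ⟨cb, _, hsb⟩ := hF2sup c' h2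
    obtain ⟨x, hxs⟩ := supp_val_nonempty cb
    have hx1 : x ∈ Subtype.val '' ca.supp := by rw [← hsa, hsb]; exact hxs
    have hxE : x ∈ E := supp_val_sub cb hxs
    have hxK : x ∈ K := hxE.1.1
    have : ca = c := comp_eq_of_mem hx1 hxK
    exact hca.2 (mem_singleton_iff.mpr this)
  have hc_mem : c ∈ {c' : (G.induce D).ConnectedComponent | Odd c'.supp.ncard} := hodd c
  have hOD : _root_.oddComponents (G.induce D)
      = ({c' : (G.induce D).ConnectedComponent | Odd c'.supp.ncard}).ncard := rfl
  have hdiffcard : ({c' : (G.induce D).ConnectedComponent | Odd c'.supp.ncard} \ {c}).ncard + 1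
      = T.ncard + d := by
    rw [Set.ncard_diff_singleton_add_one hc_mem (Set.toFinite _), ← hOD]
    exact heq
  have hsub12 : F1 ∪ F2 ⊆ {c' : (G.induce D₂).ConnectedComponent | Odd c'.supp.ncard} := by
    rintro c' (h | h)
    exacts [hF1odd c' h, hF2odd c' h]
  have hcount := Set.ncard_le_ncard hsub12 (Set.toFinite _)
  rw [Set.ncard_union_eq hdisjF (Set.toFinite _) (Set.toFinite _), hF1card, hF2card] at hcount
  have hEodd : T'.ncard + 2
      ≤ ({cs : (G.induce E).ConnectedComponent | Odd cs.supp.ncard}).ncard := hT'le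
  have hsetid : A \ (T ∪ insert v T') = D₂ := by
    rw [hD₂, hD]
    ext x
    simp only [Set.mem_diff, Set.mem_union, Set.mem_insert_iff, Set.mem_singleton_iff]
    tauto
  have hTsub : T ∪ insert v T' ⊆ A := union_subset hTA (fun x hx => hDA (hKD (hinsK hx)))
  have hub' := hub _ hTsub
  rw [hsetid] at hub'
  have hdisjT : Disjoint T (insert v T') := by
    rw [Set.disjoint_left]
    intro x hxT hxI
    exact (hKD (hinsK hxI)).2 hxT
  have hvT' : v ∉ T' := fun h => (hT'B h).2 rfl
  have hcardT2 : (T ∪ insert v T').ncard = T.ncard + T'.ncard + 1 := by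
    rw [Set.ncard_union_eq hdisjT (Set.toFinite _) (Set.toFinite _),
      Set.ncard_insert_of_notMem hvT' (Set.toFinite _)]
    omega
  have hOD2 : _root_.oddComponents (G.induce D₂)
      = ({c' : (G.induce D₂).ConnectedComponent | Odd c'.supp.ncard}).ncard := rfl
  rw [hOD2] at hub'
  have heq2 : _root_.oddComponents (G.induce (A \ (T ∪ insert v T'))) = (T ∪ insert v T').ncard + d := by
    rw [hsetid, hOD2, hcardT2]
    omega
  have := hmax _ hTsub heq2
  omega
end AuxTutte
section AuxTutteMain
open Set

variable {V : Type*}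

private lemma tutte_rel [Finite V] (G : SimpleGraph V) (A : Set V)
    (h : ∀ T ⊆ A, _root_.oddComponents (G.induce (A \ T)) ≤ T.ncard) :
    ∃ M, IsPMOn G A M := by
  classical
  suffices H : ∀ n (A : Set V), A.ncard = n →
      (∀ T ⊆ A, _root_.oddComponents (G.induce (A \ T)) ≤ T.ncard) → ∃ M, IsPMOn G A M from
    H _ A rfl h
  clear h A
  intro n
  induction n using Nat.strong_induction_on with
  | _ n ih =>
  intro A hn h
  rcases A.eq_empty_or_nonempty with rfl | ⟨v₀, hv₀⟩
  · exact ⟨∅, isPMOn_empty⟩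
  subst hn
  have hApos : 1 ≤ A.ncard := by
    have : A.Nonempty := ⟨v₀, hv₀⟩
    have := this.ncard_pos (Set.toFinite _)
    omega
  have hAe : Even A.ncard := by
    have h0 := h ∅ (empty_subset A)
    rw [diff_empty] at h0
    simp only [Set.ncard_empty, Nat.le_zero] at h0
    have := oddComponents_induce_mod G A
    rw [h0] at this
    rw [Nat.even_iff]
    omega
  have hone : _root_.oddComponents (G.induce (A \ {v₀})) = ({v₀} : Set V).ncard + 0 := by
    have hle := h {v₀} (singleton_subset_iff.mpr hv₀)
    have hmod := oddComponents_induce_mod G (A \ {v₀})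
    have hd : (A \ {v₀}).ncard = A.ncard - 1 :=
      Set.ncard_diff_singleton_of_mem hv₀
    rw [Set.ncard_singleton] at hle ⊢
    obtain ⟨k, hk⟩ := hAe
    omega
  have hvio : ∀ B ⊆ A, B ≠ A → Even B.ncard → (¬ ∃ M, IsPMOn G B M) →
      ∃ T' ⊆ B, T'.ncard + 2 ≤ _root_.oddComponents (G.induce (B \ T')) := by
    intro B hBA hBne hBev hnoM
    have hBn : B.ncard < A.ncard :=
      Set.ncard_lt_ncard (ssubset_of_subset_of_ne hBA hBne) (Set.toFinite _)
    by_contra hvionot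
    push_neg at hvionot
    refine hnoM (ih _ hBn B rfl ?_)
    intro T' hT'
    by_contra hgt
    push_neg at hgt
    have hup := odd_upgrade hT' hBev hgt
    have h2 := hvionot T' hT'
    omega
  obtain ⟨T, hTA, heqT, hcomps⟩ := max_tutte_aux G A 0 (by simpa using h)
    ⟨{v₀}, singleton_subset_iff.mpr hv₀, hone⟩ hvio
  set D := A \ T with hD
  have hDA : D ⊆ A := diff_subset
  haveI : Fintype ((G.induce D).ConnectedComponent) := Fintype.ofFinite _
  set t : (G.induce D).ConnectedComponent → Finset V :=
    fun c => (Set.toFinite (T ∩ {y | ∃ x ∈ Subtype.val '' c.supp, G.Adj x y})).toFinset with ht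
  have hmemt : ∀ c y, y ∈ t c ↔ y ∈ T ∧ ∃ x ∈ Subtype.val '' c.supp, G.Adj x y := by
    intro c y
    rw [ht, Set.Finite.mem_toFinset]
    exact Iff.rfl
  have hhall : ∀ s : Finset ((G.induce D).ConnectedComponent), s.card ≤ (s.biUnion t).card := by
    intro s
    set W : Set V := ↑(s.biUnion t) with hW
    have hWT : W ⊆ T := by
      intro x hx
      rw [hW, Finset.coe_biUnion] at hx
      simp only [Finset.mem_coe, Set.mem_iUnion] at hx
      obtain ⟨c, _, hxc⟩ := hx
      exact ((hmemt c x).mp hxc).1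
    obtain ⟨F, hFodd, hFcard, hFsup⟩ := transfer_family (G := G) (B := D) (C := A \ W)
      ↑s (fun c _ => (hcomps c).1)
      (by
        intro c _ x hx
        have hxD : x ∈ D := supp_val_sub c hx
        exact ⟨hxD.1, fun hw => hxD.2 (hWT hw)⟩)
      (by
        intro c hc x hx y hy hadj
        by_cases hyT : y ∈ T
        · exfalso
          have hyt : y ∈ t c := (hmemt c y).mpr ⟨hyT, x, hx, hadj⟩
          have : y ∈ W := by
            rw [hW, Finset.coe_biUnion]
            simp only [Finset.mem_coe, Set.mem_iUnion]
            exact ⟨c, hc, hyt⟩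
          exact hy.2 this
        · exact supp_closed c x hx y ⟨hy.1, hyT⟩ hadj)
    have hle := h W (hWT.trans hTA)
    have hsubO : F ⊆ {c' : (G.induce (A \ W)).ConnectedComponent | Odd c'.supp.ncard} :=
      fun c' hc' => hFodd c' hc'
    have hcount := Set.ncard_le_ncard hsubO (Set.toFinite _)
    rw [hFcard, Set.ncard_coe_finset] at hcount
    have hWc : W.ncard = (s.biUnion t).card := Set.ncard_coe_finset _
    have hOW : _root_.oddComponents (G.induce (A \ W))
        = ({c' : (G.induce (A \ W)).ConnectedComponent | Odd c'.supp.ncard}).ncard := rfl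
    rw [hOW] at hle
    omega
  obtain ⟨f, hfinj, hft⟩ := (Finset.all_card_le_biUnion_card_iff_exists_injective t).mp hhall
  have hfT : ∀ c, f c ∈ T := fun c => ((hmemt c (f c)).mp (hft c)).1
  have hfadj : ∀ c, ∃ x ∈ Subtype.val '' c.supp, G.Adj x (f c) :=
    fun c => ((hmemt c (f c)).mp (hft c)).2
  choose xc hxc hadjxc using hfadj
  choose Mc' hMc' using fun c => (hcomps c).2 (xc c) (hxc c)
  have hcardCC : Fintype.card ((G.induce D).ConnectedComponent) = T.ncard := by
    have h1 : _root_.oddComponents (G.induce D) = T.ncard := by simpa using heqT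
    rw [← h1]
    show _ = ({c : (G.induce D).ConnectedComponent | Odd c.supp.ncard}).ncard
    have h2 : {c : (G.induce D).ConnectedComponent | Odd c.supp.ncard} = Set.univ :=
      eq_univ_of_forall (fun c => (hcomps c).1)
    rw [h2, Set.ncard_univ, Nat.card_eq_fintype_card]
  have hfsurj : ∀ y ∈ T, ∃ c, f c = y := by
    have himsub : Finset.univ.image f ⊆ (Set.toFinite T).toFinset := by
      intro y hy
      simp only [Finset.mem_image, Finset.mem_univ, true_and] at hy
      obtain ⟨c, rfl⟩ := hy
      rw [Set.Finite.mem_toFinset]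
      exact hfT c
    have hcards : ((Set.toFinite T).toFinset).card ≤ (Finset.univ.image f).card := by
      rw [Finset.card_image_of_injective _ hfinj, Finset.card_univ, hcardCC,
        ← Set.ncard_eq_toFinset_card T]
    have him : Finset.univ.image f = (Set.toFinite T).toFinset :=
      Finset.eq_of_subset_of_card_le himsub hcards
    intro y hyT
    have : y ∈ Finset.univ.image f := by
      rw [him, Set.Finite.mem_toFinset]
      exact hyT
    simpa using this
  -- assembly
  have hpiece : ∀ c, IsPMOn G (insert (f c) (Subtype.val '' c.supp))
      (({s(xc c, f c)} : Set (Sym2 V)) ∪ Mc' c) := by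
    intro c
    have hdisj : Disjoint ({xc c, f c} : Set V) (Subtype.val '' c.supp \ {xc c}) := by
      rw [Set.disjoint_left]
      rintro z (rfl | rfl)
      · exact fun hz => hz.2 rfl
      · intro hz
        exact ((supp_val_sub c hz.1).2) (hfT c)
    have h1 := isPMOn_union hdisj (isPMOn_single (hadjxc c)) (hMc' c)
    have hsets : ({xc c, f c} : Set V) ∪ (Subtype.val '' c.supp \ {xc c})
        = insert (f c) (Subtype.val '' c.supp) := by
      have hx := hxc c
      ext z
      simp only [Set.mem_union, Set.mem_insert_iff, Set.mem_diff, Set.mem_singleton_iff]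
      constructor
      · rintro ((rfl | rfl) | ⟨hz, _⟩)
        · exact Or.inr hx
        · exact Or.inl rfl
        · exact Or.inr hz
      · rintro (rfl | hz)
        · exact Or.inl (Or.inr rfl)
        · by_cases hzx : z = xc c
          · exact Or.inl (Or.inl hzx)
          · exact Or.inr ⟨hz, hzx⟩
    rw [hsets] at h1
    exact h1
  have hglobal := isPMOn_biUnion (G := G) (s := Finset.univ)
    (A := fun c => insert (f c) (Subtype.val '' c.supp))
    (M := fun c => ({s(xc c, f c)} : Set (Sym2 V)) ∪ Mc' c)
    (by
      intro i _ j _ hij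
      rw [Set.disjoint_left]
      rintro z (rfl | hz) hz'
      · rcases hz' with hz' | hz'
        · exact hij (hfinj hz'.symm ▸ rfl)
        · exact (supp_val_sub j hz').2 (hfT i)
      · rcases hz' with rfl | hz'
        · exact (supp_val_sub i hz).2 (hfT j)
        · exact hij (comp_eq_of_mem hz hz'))
    (fun c _ => hpiece c)
  have hcover : (⋃ c ∈ Finset.univ, insert (f c) (Subtype.val '' c.supp)) = A := by
    apply Set.Subset.antisymm
    · intro z hz
      simp only [Set.mem_iUnion] at hz
      obtain ⟨c, _, hz⟩ := hz
      rcases hz with rfl | hz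
      · exact hTA (hfT c)
      · exact hDA (supp_val_sub c hz)
    · intro z hzA
      by_cases hzT : z ∈ T
      · obtain ⟨c, rfl⟩ := hfsurj z hzT
        simp only [Set.mem_iUnion]
        exact ⟨c, Finset.mem_univ c, Or.inl rfl⟩
      · have hzD : z ∈ D := ⟨hzA, hzT⟩
        simp only [Set.mem_iUnion]
        refine ⟨(G.induce D).connectedComponentMk ⟨z, hzD⟩, Finset.mem_univ _, Or.inr ?_⟩
        exact ⟨⟨z, hzD⟩, ConnectedComponent.connectedComponentMk_mem, rfl⟩
  rw [hcover] at hglobal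
  exact ⟨_, hglobal⟩

end AuxTutteMain
section AuxBoundary
open Set

variable {V : Type*} {G : SimpleGraph V}

private lemma exists_pm_iso {V' W : Type*} {G1 : SimpleGraph V'} {H : SimpleGraph W}
    (φ : G1 ≃g H) (h : ∃ M, IsPM G1 M) : ∃ M, IsPM H M := by
  obtain ⟨M, h1, h2, h3⟩ := h
  refine ⟨Sym2.map φ '' M, ?_, ?_, ?_⟩
  · rintro _ ⟨e, he, rfl⟩
    obtain ⟨x, y, hadj, rfl⟩ := edge_repr e (h1 he)
    rw [Sym2.map_pair_eq, SimpleGraph.mem_edgeSet]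
    exact φ.map_adj_iff.mpr hadj
  · rintro _ ⟨e, he, rfl⟩ _ ⟨f, hf, rfl⟩ hne v hv hv'
    have hef : e ≠ f := by rintro rfl; exact hne rfl
    obtain ⟨a, ha, rfl⟩ := Sym2.mem_map.mp hv
    obtain ⟨b, hb, hba⟩ := Sym2.mem_map.mp hv'
    have : b = a := φ.injective hba
    subst this
    exact h2 e he f hf hef b ha hb
  · intro w
    obtain ⟨e, he, hw⟩ := h3 (φ.symm w)
    exact ⟨Sym2.map φ e, ⟨e, he, rfl⟩, Sym2.mem_map.mpr ⟨φ.symm w, hw, by simp⟩⟩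

private lemma exists_pm_induce_iff {A : Set V} :
    (∃ M, IsPM (G.induce A) M) ↔ ∃ M, IsPMOn G A M := by
  constructor
  · rintro ⟨M, h1, h2, h3⟩
    refine ⟨Sym2.map Subtype.val '' M, ?_, ?_, ?_, ?_⟩
    · rintro _ ⟨e, he, rfl⟩
      obtain ⟨x, y, hadj, rfl⟩ := edge_repr e (h1 he)
      rw [Sym2.map_pair_eq, SimpleGraph.mem_edgeSet]
      exact hadj
    · rintro _ ⟨e, he, rfl⟩ w hw
      obtain ⟨a, _, rfl⟩ := Sym2.mem_map.mp hw
      exact a.2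
    · rintro _ ⟨e, he, rfl⟩ _ ⟨f, hf, rfl⟩ hne v hv hv'
      have hef : e ≠ f := by rintro rfl; exact hne rfl
      obtain ⟨a, ha, rfl⟩ := Sym2.mem_map.mp hv
      obtain ⟨b, hb, hba⟩ := Sym2.mem_map.mp hv'
      have : b = a := Subtype.val_injective hba
      subst this
      exact h2 e he f hf hef b ha hb
    · intro w hw
      obtain ⟨e, he, hme⟩ := h3 ⟨w, hw⟩
      exact ⟨Sym2.map Subtype.val e, ⟨e, he, rfl⟩,
        Sym2.mem_map.mpr ⟨⟨w, hw⟩, hme, rfl⟩⟩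
  · rintro ⟨M, h1, h2, h3, h4⟩
    refine ⟨{e : Sym2 ↑A | Sym2.map Subtype.val e ∈ M}, ?_, ?_, ?_⟩
    · intro e he
      induction e with
      | _ a b =>
        have he' : Sym2.map Subtype.val s(a, b) ∈ M := he
        rw [Sym2.map_pair_eq] at he'
        have := h1 he'
        rw [SimpleGraph.mem_edgeSet] at this ⊢
        exact this
    · intro e he f hf hef v hv hv'
      have hne : Sym2.map Subtype.val e ≠ Sym2.map Subtype.val f := by
        intro hEq
        exact hef (Sym2.map.injective Subtype.val_injective hEq)
      exact h3 _ he _ hf hne ↑v (Sym2.mem_map.mpr ⟨v, hv, rfl⟩)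
        (Sym2.mem_map.mpr ⟨v, hv', rfl⟩)
    · intro a
      obtain ⟨e, he, hae⟩ := h4 ↑a a.2
      obtain ⟨w, hadj, hew⟩ := mem_edge (h1 he) hae
      have hwA : w ∈ A := h2 e he w (by rw [hew]; simp)
      refine ⟨s(a, ⟨w, hwA⟩), ?_, by simp⟩
      show Sym2.map Subtype.val s(a, ⟨w, hwA⟩) ∈ M
      rw [Sym2.map_pair_eq]
      exact hew ▸ he

private def fcIso {D : Set V} (c : (G.induce D).ConnectedComponent) (w : ↑c.supp) :
    (((G.induce D).induce c.supp).induce {w}ᶜ) ≃g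
      G.induce ((Subtype.val '' c.supp) \ {((w : ↑D) : V)}) where
  toFun z := ⟨((z : ↑c.supp) : ↑D), ⟨⟨(z : ↑c.supp), (z : ↑c.supp).2, rfl⟩, by
    intro hEq
    rw [Set.mem_singleton_iff] at hEq
    have h1 : (z : ↑c.supp) = (w : ↑c.supp) := Subtype.ext (Subtype.ext hEq)
    exact z.2 h1⟩⟩
  invFun y := ⟨⟨⟨(y : V), by
      obtain ⟨u, _, hu⟩ := y.2.1
      exact hu ▸ u.2⟩, by
      obtain ⟨u, hu, hval⟩ := y.2.1
      have : (⟨(y : V), hval ▸ u.2⟩ : ↑D) = u := Subtype.ext hval.symm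
      rw [show (⟨(y : V), _⟩ : ↑D) = u from this]
      exact hu⟩, by
    intro hEq
    apply y.2.2
    rw [Set.mem_singleton_iff]
    exact congrArg (fun (t : ↑c.supp) => ((t : ↑D) : V)) hEq⟩
  left_inv z := by
    apply Subtype.ext
    apply Subtype.ext
    apply Subtype.ext
    rfl
  right_inv y := by
    apply Subtype.ext
    rfl
  map_rel_iff' := Iff.rfl

private lemma fc_component {D : Set V} (c : (G.induce D).ConnectedComponent)
    (h : ∀ v ∈ Subtype.val '' c.supp, ∃ M, IsPMOn G (Subtype.val '' c.supp \ {v}) M) :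
    IsFactorCritical ((G.induce D).induce c.supp) := by
  intro w
  have hv : ((w : ↑D) : V) ∈ Subtype.val '' c.supp := ⟨w, w.2, rfl⟩
  have hpm : ∃ M, IsPM (G.induce ((Subtype.val '' c.supp) \ {((w : ↑D) : V)})) M :=
    exists_pm_induce_iff.mpr (h _ hv)
  exact exists_pm_iso (fcIso c w).symm hpm

end AuxBoundary
/-- Lemma 3.1. -/
theorem stmt9 {V : Type*} [Fintype V] (l : ℕ) (hl : 1 ≤ l)
    (G : SimpleGraph V) (hcard : 2 * l + 2 ≤ Fintype.card V)
    (hext : IsExtendable G (l - 1)) :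
    ¬ IsExtendable G l ↔
      ∃ S : Set V,
        (∃ N : Set (Sym2 V), N ⊆ G.edgeSet ∧
          (∀ e ∈ N, ∀ w : V, w ∈ e → w ∈ S) ∧
          (∀ e ∈ N, ∀ f ∈ N, e ≠ f → ∀ v : V, v ∈ e → v ∉ f) ∧
          N.ncard = l) ∧
        (∀ c : (G.induce Sᶜ).ConnectedComponent,
          IsFactorCritical ((G.induce Sᶜ).induce c.supp)) ∧
        _root_.oddComponents (G.induce Sᶜ) + 2 * l = S.ncard + 2 := by
  classical
  obtain ⟨hconn, hcard2, hpm, hextd⟩ := hext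
  have hcardV : Even (Fintype.card V) := by
    obtain ⟨M₀, hM₀⟩ := hpm
    have := isPMOn_even (univ_of_isPM hM₀)
    rwa [Set.ncard_univ, Nat.card_eq_fintype_card] at this
  constructor
  · -- forward direction
    intro hnot
    have hbad : ∃ N : Set (Sym2 V), N ⊆ G.edgeSet ∧
        (∀ e ∈ N, ∀ f ∈ N, e ≠ f → ∀ v : V, v ∈ e → v ∉ f) ∧ N.ncard = l ∧
        ∀ M, IsPM G M → ¬ N ⊆ M := by
      by_contra hforall
      push_neg at hforall
      exact hnot ⟨hconn, hcard, hpm, fun N h1 h2 h3 => hforall N h1 h2 h3⟩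
    obtain ⟨N, hN1, hN2, hN3, hNbad⟩ := hbad
    set U := eSupp N with hU
    have hUcard : U.ncard = 2 * l := by
      rw [hU, eSupp_card hN1 hN2, hN3]
    have hNU : ∀ e ∈ N, ∀ w : V, w ∈ e → w ∈ U := fun e he w hw => ⟨e, he, hw⟩
    have hNne : N.Nonempty := Set.nonempty_of_ncard_ne_zero (by omega)
    obtain ⟨e₀, he₀⟩ := hNne
    obtain ⟨x, y, hxyadj, he₀xy⟩ := edge_repr e₀ (hN1 he₀)
    have hxU : x ∈ U := ⟨e₀, he₀, by rw [he₀xy]; simp⟩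
    have hyU : y ∈ U := ⟨e₀, he₀, by rw [he₀xy]; simp⟩
    haveI : Nonempty V := ⟨x⟩
    have hN'c : (N \ {e₀}).ncard = l - 1 := by
      rw [Set.ncard_diff_singleton_of_mem he₀, hN3]
    obtain ⟨M, hMpm, hNM⟩ := hextd (N \ {e₀}) (fun e he => hN1 he.1)
      (fun a ha b hb => hN2 a ha.1 b hb.1) hN'c
    set R := {w | w ∈ Uᶜ ∧ ∃ e ∈ M, w ∈ e ∧ ∃ u ∈ U, u ∈ e} with hR
    set M₁ := {e ∈ M | ∀ v, v ∈ e → v ∉ U} with hM₁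
    have hM₁pm : IsPMOn G (Uᶜ \ R) M₁ := by
      refine ⟨fun e he => hMpm.1 he.1, ?_, fun a ha b hb => hMpm.2.1 a ha.1 b hb.1, ?_⟩
      · rintro e ⟨heM, hnotU⟩ v hv
        refine ⟨hnotU v hv, ?_⟩
        rintro ⟨hvUc, e', he'M, hve', u, huU, hue'⟩
        have hne : e' ≠ e := by
          rintro rfl
          exact hnotU u hue' huU
        exact hMpm.2.1 e' he'M e heM hne v hve' hv
      · rintro w ⟨hwUc, hwR⟩
        obtain ⟨e, heM, hwe⟩ := hMpm.2.2 w
        have hnotU : ∀ v, v ∈ e → v ∉ U := by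
          intro v hv hvU
          exact hwR ⟨hwUc, e, heM, hwe, v, hvU, hv⟩
        exact ⟨e, ⟨heM, hnotU⟩, hwe⟩
    have hRcard : R.ncard ≤ 2 := by
      have hmap : ∀ w, w ∈ R → ∃ u, u ∈ ({x, y} : Set V) ∧ ∃ e ∈ M, w ∈ e ∧ u ∈ e := by
        intro w hw
        obtain ⟨hwUc, e, heM, hwe, u, huU, hue⟩ := hw
        obtain ⟨f, hfN, huf⟩ := huU
        by_cases hfe₀ : f = e₀
        · subst hfe₀
          refine ⟨u, ?_, e, heM, hwe, hue⟩
          rw [he₀xy] at huf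
          rcases Sym2.mem_iff.mp huf with rfl | rfl
          · exact Or.inl rfl
          · exact Or.inr rfl
        · have hfM : f ∈ M := hNM ⟨hfN, hfe₀⟩
          have hfe : f = e := by
            by_contra hne
            exact hMpm.2.1 f hfM e heM hne u huf hue
          exfalso
          subst hfe
          exact hwUc (hNU f hfN w hwe)
      haveI : Nonempty (Sym2 V) := ⟨s(x, x)⟩
      choose! u hu eu heu hweu hueu using hmap
      have hinj : Set.InjOn u R := by
        intro w1 h1 w2 h2 hEq
        have he12 : eu w1 = eu w2 := by
          by_contra hne
          exact hMpm.2.1 (eu w1) (heu w1 h1) (eu w2) (heu w2 h2) hne (u w1)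
            (hueu w1 h1) (hEq ▸ hueu w2 h2)
        obtain ⟨z, hadj, hez⟩ := mem_edge (hMpm.1 (heu w1 h1)) (hueu w1 h1)
        have huU' : u w1 ∈ U := by
          rcases hu w1 h1 with rfl | rfl
          exacts [hxU, hyU]
        have hw1z : w1 = z := by
          have hh := hweu w1 h1
          rw [hez] at hh
          rcases Sym2.mem_iff.mp hh with h | h
          · exact absurd (h.symm ▸ huU') h1.1
          · exact h
        have hw2z : w2 = z := by
          have hh := hweu w2 h2
          rw [← he12, hez] at hh
          rcases Sym2.mem_iff.mp hh with h | h
          · exact absurd (h.symm ▸ huU') h2.1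
          · exact h
        rw [hw1z, hw2z]
      have := Set.ncard_le_ncard_of_injOn u (fun w hw => hu w hw) hinj
        (Set.toFinite ({x, y} : Set V))
      have hp : ({x, y} : Set V).ncard = 2 := Set.ncard_pair hxyadj.ne
      omega
    have hsum : U.ncard + Uᶜ.ncard = Fintype.card V := by
      rw [Set.ncard_add_ncard_compl, Nat.card_eq_fintype_card]
    have hUc_even : Even (Uᶜ.ncard) := by
      obtain ⟨k, hk⟩ := hcardV
      exact ⟨k - l, by omega⟩
    have hub : ∀ T ⊆ Uᶜ, _root_.oddComponents (G.induce (Uᶜ \ T)) ≤ T.ncard + 2 := by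
      intro T hTUc
      have hle := oddComponents_le_ncard (G := G) (B := Uᶜ \ T) (Y := R ∪ T) hM₁pm
        (by
          rintro v ⟨⟨hvUc, hvT⟩, hvA⟩
          by_cases hvR : v ∈ R
          · exact Or.inl hvR
          · exact absurd ⟨hvUc, hvR⟩ hvA)
        (by
          intro e he v w hv hw hvB hwB
          have hwUc : w ∈ Uᶜ \ R := hM₁pm.2.1 e he w hw
          by_cases hwT : w ∈ T
          · exact Or.inr hwT
          · exact absurd ⟨hwUc.1, hwT⟩ hwB)
      have hun : (R ∪ T).ncard ≤ R.ncard + T.ncard := Set.ncard_union_le R T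
      omega
    have hnoPMUc : ¬ ∃ M', IsPMOn G Uᶜ M' := by
      rintro ⟨M', hM'⟩
      have hNUpm : IsPMOn G U N := ⟨hN1, hNU, hN2, fun u hu => hu⟩
      have hdisj : Disjoint (Uᶜ : Set V) U := disjoint_compl_left
      have hall := isPMOn_union hdisj hM' hNUpm
      rw [Set.compl_union_self] at hall
      exact hNbad _ (isPM_of_univ hall) (fun e he => Or.inr he)
    have hvio : ∀ B ⊆ Uᶜ, B ≠ Uᶜ → Even B.ncard → (¬ ∃ M', IsPMOn G B M') →
        ∃ T' ⊆ B, T'.ncard + 2 ≤ _root_.oddComponents (G.induce (B \ T')) := by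
      intro B _ _ hBev hnoM
      by_contra hno
      push_neg at hno
      refine hnoM (tutte_rel G B ?_)
      intro T' hT'
      by_contra hgt
      push_neg at hgt
      have h1 := odd_upgrade hT' hBev hgt
      have h2 := hno T' hT'
      omega
    have hex : ∃ T ⊆ Uᶜ, _root_.oddComponents (G.induce (Uᶜ \ T)) = T.ncard + 2 := by
      have hnall : ¬ ∀ T ⊆ Uᶜ, _root_.oddComponents (G.induce (Uᶜ \ T)) ≤ T.ncard :=
        fun hall => hnoPMUc ⟨_, (tutte_rel G Uᶜ hall).choose_spec⟩
      push_neg at hnall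
      obtain ⟨T₀, hT₀sub, hT₀gt⟩ := hnall
      have h2 := odd_upgrade hT₀sub hUc_even hT₀gt
      exact ⟨T₀, hT₀sub, le_antisymm (hub T₀ hT₀sub) h2⟩
    obtain ⟨T, hTsub, heqT, hcompsT⟩ := max_tutte_aux G Uᶜ 2 hub hex hvio
    have hSc : (U ∪ T)ᶜ = Uᶜ \ T := by
      rw [Set.compl_union, Set.diff_eq]
    refine ⟨U ∪ T, ⟨N, hN1, fun e he w hw => Or.inl (hNU e he w hw), hN2, hN3⟩, ?_, ?_⟩
    · rw [hSc]
      intro c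
      exact fc_component c (fun v hv => (hcompsT c).2 v hv)
    · rw [hSc, heqT]
      have hdisjUT : Disjoint U T := by
        rw [Set.disjoint_left]
        intro a haU haT
        exact (hTsub haT) haU
      rw [Set.ncard_union_eq hdisjUT (Set.toFinite _) (Set.toFinite _), hUcard]
      omega
  · -- backward direction
    rintro ⟨S, ⟨N, hN1, hNS, hN2, hN3⟩, hfc, hcount⟩ hIsExt
    obtain ⟨M, hMpm, hNM⟩ := hIsExt.2.2.2 N hN1 hN2 hN3
    have hUcard : (eSupp N).ncard = 2 * l := by
      rw [eSupp_card hN1 hN2, hN3]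
    have hUS : eSupp N ⊆ S := by
      rintro v ⟨e, he, hve⟩
      exact hNS e he v hve
    have hMN : IsPMOn G {v | ∃ e ∈ M \ N, v ∈ e} (M \ N) :=
      ⟨fun e he => hMpm.1 he.1, fun e he w hw => ⟨e, he, hw⟩,
        fun a ha b hb => hMpm.2.1 a ha.1 b hb.1, fun w hw => hw⟩
    have h1 : Sᶜ \ {v | ∃ e ∈ M \ N, v ∈ e} ⊆ S \ eSupp N := by
      rintro v ⟨hvSc, hvA⟩
      exfalso
      obtain ⟨e, heM, hve⟩ := hMpm.2.2 v
      by_cases heN : e ∈ N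
      · exact hvSc (hNS e heN v hve)
      · exact hvA ⟨e, ⟨heM, heN⟩, hve⟩
    have h2 : ∀ e ∈ M \ N, ∀ v w : V, v ∈ e → w ∈ e → v ∈ Sᶜ → w ∉ Sᶜ → w ∈ S \ eSupp N := by
      intro e he v w hv hw hvS hwS
      refine ⟨Set.not_notMem.mp hwS, ?_⟩
      rintro ⟨f, hfN, hwf⟩
      have hfM : f ∈ M := hNM hfN
      have hfe : f ≠ e := by
        rintro rfl
        exact he.2 hfN
      exact hMpm.2.1 f hfM e he.1 hfe w hwf hw
    have hle := oddComponents_le_ncard hMN h1 h2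
    have hSge : 2 * l ≤ S.ncard := by
      rw [← hUcard]
      exact Set.ncard_le_ncard hUS (Set.toFinite _)
    have hdiffc : (S \ eSupp N).ncard = S.ncard - 2 * l := by
      rw [Set.ncard_diff hUS (Set.toFinite _), hUcard]
    omega
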